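/- arXiv:2102.05155 — 2 statements merged into one kernel-verified Lean document; each statement's English description precedes it below -/
import Mathlib

section
/- Let V ∈ C^{1,1}(ℝ^d), let T > 0, let K ⊂ ℝ^d × ℝ^d be compact and Ω ⊂ ℝ^d open satisfying the geometric condition (GC). Then C[T,K,Ω] := inf_{(x,ξ)∈K} ∫₀^T 1_Ω(X(t;x,ξ)) dt > 0. -/
open MeasureTheory Complex Real
open scoped ENNReal NNReal InnerProductSpace

noncomputable section

/-- Position space `ℝ^d`. -/
abbrev Rd (d : ℕ) := EuclideanSpace ℝ (Fin d)

/-- The Schrödinger coherent state `|q,p⟩(x) = (πhb)^{-d/4} e^{-|x-q|²/(2hb)} e^{ip·(x-q)/hb}`. -/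
def coherent (d : ℕ) (hb : ℝ) (q p : Rd d) (x : Rd d) : ℂ :=
  ((π * hb) ^ (-(d : ℝ) / 4) : ℝ) *
    Complex.exp ((-‖x - q‖ ^ 2 / (2 * hb) : ℝ) + Complex.I * ((inner ℝ p (x - q) : ℝ)) / (hb : ℝ))

/-- `L²` pairing `⟨φ, ψ⟩ = ∫ conj φ ψ`. -/
def pairing (d : ℕ) (φ ψ : Rd d → ℂ) : ℂ :=
  ∫ x : Rd d, (starRingEnd ℂ) (φ x) * ψ x

/-- Integral of the Husimi function of `ψ` over `K ⊂ ℝ^d × ℝ^d`: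
`∫_K |⟨ψ|q,p⟩|² dq dp/(2πhb)^d`, points of `K` being written `z = (q,p)`. -/
def husimiMass (d : ℕ) (hb : ℝ) (ψ : Rd d → ℂ) (K : Set (Rd d × Rd d)) : ℝ :=
  ∫ z in K, ‖pairing d ψ (coherent d hb z.1 z.2)‖ ^ 2 / (2 * π * hb) ^ d

/-- Variance of the position observable `x_j` in the state `ψ`. -/
def posVar (d : ℕ) (ψ : Rd d → ℂ) (j : Fin d) : ℝ :=
  (∫ x : Rd d, (x j) ^ 2 * ‖ψ x‖ ^ 2) - (∫ x : Rd d, (x j) * ‖ψ x‖ ^ 2) ^ 2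

/-- Variance of the momentum observable `-ihb∂_j` in the state `ψ`. -/
def momVar (d : ℕ) (hb : ℝ) (ψ : Rd d → ℂ) (j : Fin d) : ℝ :=
  (∫ x : Rd d, ‖(hb : ℂ) * fderiv ℝ ψ x (EuclideanSpace.single j (1 : ℝ))‖ ^ 2) -
    (∫ x : Rd d, ((starRingEnd ℂ) (ψ x) *
      (-Complex.I * (hb : ℂ) * fderiv ℝ ψ x (EuclideanSpace.single j (1 : ℝ)))).re) ^ 2

/-- `Δ(ψ)² = Σ_j (Δ_{x_j}(ψ)² + Δ_{-ihb∂_j}(ψ)²)`. -/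
def disp2 (d : ℕ) (hb : ℝ) (ψ : Rd d → ℂ) : ℝ :=
  ∑ j : Fin d, (posVar d ψ j + momVar d hb ψ j)

/-- `Δ(ψ)`. -/
def disp (d : ℕ) (hb : ℝ) (ψ : Rd d → ℂ) : ℝ := Real.sqrt (disp2 d hb ψ)

/-- Laplacian as the sum of the second derivatives along the coordinate directions. -/
def laplacian (d : ℕ) (f : Rd d → ℂ) (x : Rd d) : ℂ :=
  ∑ j : Fin d, fderiv ℝ (fun y => fderiv ℝ f y (EuclideanSpace.single j (1 : ℝ))) x
    (EuclideanSpace.single j (1 : ℝ))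

/-- `ψ : ℝ → L²(ℝ^d)` is the solution `t ↦ U(t)*ψ(0)` of the Schrödinger equation
`ihb ∂_t ψ = (-½hb²Δ + V)ψ`: it solves the PDE, stays in `L²` and (the propagator
being unitary) has conserved mass. -/
structure IsSchrodingerSolution (d : ℕ) (hb : ℝ) (V : Rd d → ℝ) (ψ : ℝ → Rd d → ℂ) : Prop where
  memLp : ∀ t, MemLp (ψ t) 2 (volume : Measure (Rd d))
  mass : ∀ t, ∫ x : Rd d, ‖ψ t x‖ ^ 2 = ∫ x : Rd d, ‖ψ 0 x‖ ^ 2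
  pde : ∀ t x, Complex.I * (hb : ℂ) * deriv (fun s => ψ s x) t =
    -((hb : ℂ) ^ 2 / 2) * laplacian d (ψ t) x + (V x : ℂ) * ψ t x

/-- `Φ` is the (globally defined) Hamiltonian flow of `Ẋ = Ξ, Ξ̇ = -∇V(X)`. -/
structure IsHamFlow (d : ℕ) (V' : Rd d → Rd d) (Φ : ℝ → Rd d × Rd d → Rd d × Rd d) : Prop where
  init : ∀ z, Φ 0 z = z
  ode : ∀ z t, HasDerivAt (fun s => Φ s z) ((Φ t z).2, -V' (Φ t z).1) t

/-- The constant `C[T,K,Ω] := inf_{(x,ξ)∈K} ∫₀^T 1_Ω(X(t;x,ξ)) dt`. -/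
def obsConst (d : ℕ) (Φ : ℝ → Rd d × Rd d → Rd d × Rd d) (T : ℝ) (K : Set (Rd d × Rd d))
    (Ω : Set (Rd d)) : ℝ :=
  ⨅ z : K, ∫ t in (0:ℝ)..T, Ω.indicator 1 ((Φ t z.1).1)

/-- `D[T,L] = (e^{(1+L²)T/2} - 1)/(1+L²)`. -/
def Dconst (T L : ℝ) : ℝ := (Real.exp ((1 + L ^ 2) * T / 2) - 1) / (1 + L ^ 2)

/-- `Ω_δ = {x : dist(x,Ω) < δ}`. -/
def enlarge (d : ℕ) (Ω : Set (Rd d)) (δ : ℝ) : Set (Rd d) :=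
  {x | Metric.infDist x Ω < δ}

/-- Under the geometric condition (GC), `C[T,K,Ω] = inf_{(x,ξ)∈K} ∫₀^T 1_Ω(X(t;x,ξ)) dt > 0`. -/
theorem obsConst_pos
    (d : ℕ) (V : Rd d → ℝ) (V' : Rd d → Rd d)
    (hV : ∀ x, HasGradientAt V (V' x) x) (L : ℝ≥0) (hLip : LipschitzWith L V')
    (T : ℝ) (hT : 0 < T)
    (K : Set (Rd d × Rd d)) (hK : IsCompact K) (hKne : K.Nonempty)
    (Ω : Set (Rd d)) (hΩ : IsOpen Ω)
    (Φ : ℝ → Rd d × Rd d → Rd d × Rd d) (hΦ : IsHamFlow d V' Φ)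
    -- the flow depends continuously on `(t, x, ξ)`
    (hΦcont : Continuous fun p : ℝ × (Rd d × Rd d) => Φ p.1 p.2)
    (hGC : ∀ z ∈ K, ∃ t ∈ Set.Ioo 0 T, (Φ t z).1 ∈ Ω) :
    0 < obsConst d Φ T K Ω := by
  classical
  have key : ∀ z ∈ K, ∃ δ > 0, ∀ z' : Rd d × Rd d, dist z' z < δ →
      δ ≤ ∫ s in (0:ℝ)..T, Ω.indicator 1 ((Φ s z').1) := by
    intro z hz
    obtain ⟨t, ht, htΩ⟩ := hGC z hz
    have hopen : IsOpen {p : ℝ × (Rd d × Rd d) | (Φ p.1 p.2).1 ∈ Ω} :=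
      hΩ.preimage (continuous_fst.comp hΦcont)
    obtain ⟨ε, hε, hball⟩ := Metric.isOpen_iff.1 hopen (t, z) htΩ
    set δ := min (ε / 2) (min (t / 2) ((T - t) / 2)) with hδdef
    have ht0 : 0 < t := ht.1
    have htT : t < T := ht.2
    have hδpos : 0 < δ := by
      apply lt_min (by linarith) (lt_min (by linarith) (by linarith))
    have hδε : δ < ε := lt_of_le_of_lt (min_le_left _ _) (by linarith)
    have hδt : δ < t := lt_of_le_of_lt ((min_le_right _ _).trans (min_le_left _ _)) (by linarith)
    have hδT : t + δ < T := by
      have : δ ≤ (T - t) / 2 := (min_le_right _ _).trans (min_le_right _ _)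
      linarith
    refine ⟨δ, hδpos, ?_⟩
    intro z' hz'
    have hmem : ∀ s ∈ Set.uIcc (t - δ) (t + δ), (Φ s z').1 ∈ Ω := by
      intro s hs
      rw [Set.uIcc_of_le (by linarith)] at hs
      have h1 : dist s t < ε := by
        rw [Real.dist_eq, abs_sub_lt_iff]
        constructor <;> [linarith [hs.2]; linarith [hs.1]]
      have h2 : dist z' z < ε := lt_of_lt_of_le hz' (le_of_lt hδε)
      exact hball (show (s, z') ∈ Metric.ball (t, z) ε by
        rw [Metric.mem_ball, Prod.dist_eq]; exact max_lt h1 h2)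
    set S : Set ℝ := {s : ℝ | (Φ s z').1 ∈ Ω} with hS
    have hSopen : IsOpen S := by
      apply hΩ.preimage
      exact continuous_fst.comp (hΦcont.comp (continuous_id.prodMk continuous_const))
    have hfeq : (fun s => Ω.indicator (1 : Rd d → ℝ) ((Φ s z').1)) = S.indicator (fun _ => (1:ℝ)) := by
      funext s
      by_cases h : (Φ s z').1 ∈ Ω
      · simp [Set.indicator_of_mem, h, hS, Set.mem_setOf_eq]
      · simp [Set.indicator_of_notMem, h, hS, Set.mem_setOf_eq]
    have hint : IntervalIntegrable (fun s => Ω.indicator (1 : Rd d → ℝ) ((Φ s z').1)) volume 0 T := by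
      rw [hfeq, intervalIntegrable_iff, Set.uIoc_of_le (le_of_lt hT)]
      exact (integrableOn_const measure_Ioc_lt_top.ne).indicator hSopen.measurableSet
    have hnonneg : ∀ s : ℝ, 0 ≤ Ω.indicator (1 : Rd d → ℝ) ((Φ s z').1) := fun s =>
      Set.indicator_nonneg (fun _ _ => zero_le_one) _
    have hsub : ∫ s in (t - δ)..(t + δ), Ω.indicator (1 : Rd d → ℝ) ((Φ s z').1) = 2 * δ := by
      rw [intervalIntegral.integral_congr (g := fun _ => (1:ℝ))
        (fun s hs => by simp [Set.indicator_of_mem (hmem s hs)]),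
        intervalIntegral.integral_const, smul_eq_mul]
      ring
    have hmono : ∫ s in (t - δ)..(t + δ), Ω.indicator (1 : Rd d → ℝ) ((Φ s z').1)
        ≤ ∫ s in (0:ℝ)..T, Ω.indicator (1 : Rd d → ℝ) ((Φ s z').1) := by
      apply intervalIntegral.integral_mono_interval (by linarith) (by linarith) (by linarith)
        (Filter.Eventually.of_forall fun s => hnonneg s) hint
    linarith [hsub ▸ hmono]
  choose! δ hδpos hδ using key
  obtain ⟨s, hsK, hscov⟩ := hK.elim_nhds_subcover (fun z => Metric.ball z (δ z))
    (fun z hz => Metric.ball_mem_nhds z (hδpos z hz))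
  have hsne : s.Nonempty := by
    obtain ⟨z, hz⟩ := hKne
    obtain ⟨w, hw, -⟩ := Set.mem_iUnion₂.1 (hscov hz)
    exact ⟨w, hw⟩
  set c := s.inf' hsne δ with hc
  have hcpos : 0 < c := by
    rw [hc, Finset.lt_inf'_iff]
    exact fun w hw => hδpos w (hsK w hw)
  have hbound : ∀ z ∈ K, c ≤ ∫ t in (0:ℝ)..T, Ω.indicator 1 ((Φ t z).1) := by
    intro z hz
    obtain ⟨w, hw, hzw⟩ := Set.mem_iUnion₂.1 (hscov hz)
    calc c ≤ δ w := Finset.inf'_le _ hw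
    _ ≤ _ := hδ w (hsK w hw) z (Metric.mem_ball.1 hzw)
  have : c ≤ obsConst d Φ T K Ω := by
    haveI : Nonempty K := hKne.to_subtype
    exact le_ciInf fun z => hbound z.1 z.2
  linarith
end
end

section
/- Let ħ > 0, λ > 0, (x,ξ) ∈ ℝ^d × ℝ^d, and let m be a finite positive Borel measure on ℝ^d × ℝ^d. Then trace_{𝔥}( c_λ(x,ξ,y,ħD_y)^{1/2} OP^T_ħ[(2πħ)^d m] c_λ(x,ξ,y,ħD_y)^{1/2} ) = ∬_{ℝ^d × ℝ^d} ( λ²|x−q|² + |ξ−p|² + ½(λ²+1) d ħ ) m(dp dq), as an equality in [0,+∞]. -/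
open MeasureTheory Complex Real
open scoped ENNReal NNReal InnerProductSpace

noncomputable section

/-- Quadratic form of the quantum transportation cost
`c_λ(x,ξ,y,ħD_y) = λ²|x-y|² + |ξ-ħD_y|²` at `φ`, with values in `[0,∞]`. -/
def costForm (d : ℕ) (hb lam : ℝ) (x ξ : Rd d) (φ : Rd d → ℂ) : ℝ≥0∞ :=
  ∫⁻ y : Rd d,
    ENNReal.ofReal (lam ^ 2 * ‖x - y‖ ^ 2 * ‖φ y‖ ^ 2)
    + ∑ k : Fin d,
        (‖(ξ k : ℂ) * φ y
          + Complex.I * (hb : ℂ) * fderiv ℝ φ y (EuclideanSpace.single k (1 : ℝ))‖₊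
            : ℝ≥0∞) ^ 2

/-- Quadratic form of the harmonic oscillator `-ħ²Δ_y + λ²|y|²` at `φ`. -/
def harmForm (d : ℕ) (hb lam : ℝ) (φ : Rd d → ℂ) : ℝ≥0∞ :=
  ∫⁻ y : Rd d,
    ENNReal.ofReal (lam ^ 2 * ‖y‖ ^ 2 * ‖φ y‖ ^ 2)
    + ∑ k : Fin d,
        (‖(hb : ℂ) * fderiv ℝ φ y (EuclideanSpace.single k (1 : ℝ))‖₊ : ℝ≥0∞) ^ 2

/-- A coupling `Q ∈ C(f, OP^T_ħ[(2πħ)^d μ])` of a probability density `f` on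
`ℝ^d × ℝ^d` and the Töplitz operator `OP^T_ħ[(2πħ)^d μ] = ∬ |q,p⟩⟨q,p| μ(dq dp)`.
The nonnegative trace-class operators `Q(x,ξ)` are encoded through countable
decompositions into rank-one pieces `Q(x,ξ) = Σ_j |g_j(x,ξ)⟩⟨g_j(x,ξ)|`. -/
structure CouplingT (d : ℕ) (hb : ℝ) (f : Rd d × Rd d → ℝ) (μ : Measure (Rd d × Rd d)) where
  g : Rd d × Rd d → ℕ → Rd d → ℂ
  memLp : ∀ z j, MemLp (g z j) 2 (volume : Measure (Rd d))
  traceEq : ∀ᵐ z : Rd d × Rd d, (∑' j : ℕ, ∫ y : Rd d, ‖g z j y‖ ^ 2) = f z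
  weakEq : ∀ φ ψ : Rd d → ℂ, MemLp φ 2 (volume : Measure (Rd d)) →
    MemLp ψ 2 (volume : Measure (Rd d)) →
    (∫ z : Rd d × Rd d, ∑' j : ℕ, pairing d φ (g z j) * pairing d (g z j) ψ)
      = ∫ w : Rd d × Rd d,
          pairing d φ (coherent d hb w.1 w.2) * pairing d (coherent d hb w.1 w.2) ψ ∂μ

/-- `E_{ħ,λ}(f, OP^T_ħ[(2πħ)^d μ])²`. -/
def EsqT (d : ℕ) (hb lam : ℝ) (f : Rd d × Rd d → ℝ) (μ : Measure (Rd d × Rd d)) : ℝ≥0∞ :=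
  ⨅ Q : CouplingT d hb f μ,
    ∫⁻ z : Rd d × Rd d, ∑' j : ℕ, costForm d hb lam z.1 z.2 (Q.g z j)

/-- The squared quadratic Monge–Kantorovich (Wasserstein-2) distance between two Borel
probability measures on `ℝ^d × ℝ^d`. -/
def W2sq (d : ℕ) (μ ν : Measure (Rd d × Rd d)) : ℝ≥0∞ :=
  ⨅ cpl ∈ {cpl : Measure ((Rd d × Rd d) × (Rd d × Rd d)) | cpl.fst = μ ∧ cpl.snd = ν},
    ∫⁻ w, ENNReal.ofReal (‖w.1.1 - w.2.1‖ ^ 2 + ‖w.1.2 - w.2.2‖ ^ 2) ∂cpl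


lemma gauss_integrable (d : ℕ) {b : ℝ} (hb : 0 < b) :
    Integrable (fun v : Rd d => rexp (-b * ‖v‖ ^ 2)) := by
  have h := (GaussianFourier.integrable_cexp_neg_mul_sq_norm_add (V := Rd d)
    (b := (b : ℂ)) (by simpa using hb) 0 0).norm
  refine h.congr (ae_of_all _ fun v => ?_)
  simp only [Complex.norm_exp]
  norm_num
  left
  rw [← Complex.ofReal_pow, Complex.ofReal_re]

lemma sq_gauss_integrable (d : ℕ) {b : ℝ} (hb : 0 < b) :
    Integrable (fun v : Rd d => ‖v‖ ^ 2 * rexp (-b * ‖v‖ ^ 2)) := by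
  have hmeas : AEStronglyMeasurable (fun v : Rd d => ‖v‖ ^ 2 * rexp (-b * ‖v‖ ^ 2)) volume := by
    exact Continuous.aestronglyMeasurable (by fun_prop)
  refine Integrable.mono ((gauss_integrable d (show 0 < b/2 by positivity)).const_mul (2/b))
    hmeas (ae_of_all _ fun v => ?_)
  have hv : (0:ℝ) ≤ ‖v‖ ^ 2 := by positivity
  rw [Real.norm_eq_abs, Real.norm_eq_abs]
  rw [_root_.abs_of_nonneg (by positivity : (0:ℝ) ≤ ‖v‖ ^ 2 * rexp (-b * ‖v‖ ^ 2)),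
    _root_.abs_of_nonneg (by positivity : (0:ℝ) ≤ 2 / b * rexp (-(b/2) * ‖v‖ ^ 2))]
  have key : ‖v‖ ^ 2 ≤ 2 / b * rexp (b / 2 * ‖v‖ ^ 2) := by
    have h1 := Real.add_one_le_exp (b / 2 * ‖v‖ ^ 2)
    have h3 : 2 / b * (b / 2 * ‖v‖ ^ 2 + 1) ≤ 2 / b * rexp (b / 2 * ‖v‖ ^ 2) := by
      gcongr
    have h2 : 2 / b * (b / 2 * ‖v‖ ^ 2 + 1) = ‖v‖ ^ 2 + 2 / b := by
      field_simp
    have h4 : (0:ℝ) ≤ 2 / b := by positivity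
    linarith
  calc ‖v‖ ^ 2 * rexp (-b * ‖v‖ ^ 2)
      ≤ (2 / b * rexp (b / 2 * ‖v‖ ^ 2)) * rexp (-b * ‖v‖ ^ 2) := by
        gcongr
    _ = 2 / b * rexp (-(b / 2) * ‖v‖ ^ 2) := by
        rw [mul_assoc, ← Real.exp_add]; ring_nf

lemma gauss_moment (d : ℕ) {b : ℝ} (hb : 0 < b) :
    ∫ v : Rd d, ‖v‖ ^ 2 * rexp (-b * ‖v‖ ^ 2)
      = (d / (2 * b)) * (π / b) ^ ((d : ℝ) / 2) := by
  have hb2 : (0:ℝ) < b / 2 := by positivity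
  have hF : HasDerivAt (fun c : ℝ => ∫ v : Rd d, rexp (-c * ‖v‖ ^ 2))
      (∫ v : Rd d, -‖v‖ ^ 2 * rexp (-b * ‖v‖ ^ 2)) b := by
    refine (hasDerivAt_integral_of_dominated_loc_of_deriv_le (s := Metric.ball b (b / 2)) (Metric.ball_mem_nhds b hb2)
      (F := fun c (v : Rd d) => rexp (-c * ‖v‖ ^ 2))
      (F' := fun c (v : Rd d) => -‖v‖ ^ 2 * rexp (-c * ‖v‖ ^ 2))
      (bound := fun v : Rd d => ‖v‖ ^ 2 * rexp (-(b / 2) * ‖v‖ ^ 2))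
      ?_ (gauss_integrable d hb) ?_ ?_ (sq_gauss_integrable d hb2) ?_).2
    · filter_upwards with c
      exact Continuous.aestronglyMeasurable (by fun_prop)
    · exact Continuous.aestronglyMeasurable (by fun_prop)
    · refine ae_of_all _ fun v c hc => ?_
      show ‖-‖v‖ ^ 2 * rexp (-c * ‖v‖ ^ 2)‖ ≤ ‖v‖ ^ 2 * rexp (-(b / 2) * ‖v‖ ^ 2)
      have hc' : b / 2 < c := by
        rw [Metric.mem_ball, Real.dist_eq, abs_lt] at hc
        linarith
      rw [neg_mul, norm_neg, norm_mul, Real.norm_eq_abs, Real.norm_eq_abs,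
        _root_.abs_of_nonneg (by positivity : (0:ℝ) ≤ ‖v‖ ^ 2),
        _root_.abs_of_nonneg (Real.exp_pos _).le]
      gcongr
    · refine ae_of_all _ fun v c _ => ?_
      have h1 : HasDerivAt (fun c : ℝ => -c * ‖v‖ ^ 2) (-‖v‖ ^ 2) c := by
        simpa using ((hasDerivAt_id c).neg.mul_const (‖v‖ ^ 2))
      simpa [mul_comm] using h1.exp
  have hG : HasDerivAt (fun c : ℝ => (π / c) ^ ((d : ℝ) / 2))
      (π ^ ((d : ℝ) / 2) * (-((d : ℝ) / 2) * b ^ (-((d : ℝ) / 2) - 1))) b := by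
    have h1 : HasDerivAt (fun c : ℝ => c ^ (-((d : ℝ) / 2)))
        (-((d : ℝ) / 2) * b ^ (-((d : ℝ) / 2) - 1)) b :=
      Real.hasDerivAt_rpow_const (Or.inl hb.ne')
    have h2 := h1.const_mul (π ^ ((d : ℝ) / 2))
    refine h2.congr_of_eventuallyEq ?_
    filter_upwards [eventually_gt_nhds hb] with c hc
    rw [Real.div_rpow Real.pi_pos.le hc.le, Real.rpow_neg hc.le, div_eq_mul_inv]
  have heq : (fun c : ℝ => ∫ v : Rd d, rexp (-c * ‖v‖ ^ 2))
      =ᶠ[nhds b] fun c : ℝ => (π / c) ^ ((d : ℝ) / 2) := by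
    filter_upwards [eventually_gt_nhds hb] with c hc
    rw [GaussianFourier.integral_rexp_neg_mul_sq_norm hc]
    simp [finrank_euclideanSpace_fin]
  have := (hG.congr_of_eventuallyEq heq).unique hF
  have hneg : ∫ v : Rd d, -‖v‖ ^ 2 * rexp (-b * ‖v‖ ^ 2)
      = -∫ v : Rd d, ‖v‖ ^ 2 * rexp (-b * ‖v‖ ^ 2) := by
    rw [← integral_neg]; simp
  rw [hneg] at this
  have hval : ∫ v : Rd d, ‖v‖ ^ 2 * rexp (-b * ‖v‖ ^ 2)
      = π ^ ((d : ℝ) / 2) * (((d : ℝ) / 2) * b ^ (-((d : ℝ) / 2) - 1)) := by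
    have := congrArg Neg.neg this
    simpa [neg_neg] using this.symm
  rw [hval, Real.div_rpow Real.pi_pos.le hb.le, Real.rpow_sub hb, Real.rpow_neg hb.le,
    Real.rpow_one]
  field_simp

lemma inner_gauss_integrable (d : ℕ) (a : Rd d) {b : ℝ} (hb : 0 < b) :
    Integrable (fun v : Rd d => ⟪a, v⟫_ℝ * rexp (-b * ‖v‖ ^ 2)) := by
  have hmeas : AEStronglyMeasurable (fun v : Rd d => ⟪a, v⟫_ℝ * rexp (-b * ‖v‖ ^ 2)) volume :=
    Continuous.aestronglyMeasurable ((continuous_const.inner continuous_id).mul (by fun_prop))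
  refine Integrable.mono (((gauss_integrable d hb).add (sq_gauss_integrable d hb)).const_mul ‖a‖)
    hmeas (ae_of_all _ fun v => ?_)
  simp only [Pi.add_apply]
  rw [norm_mul, Real.norm_eq_abs, Real.norm_eq_abs, Real.norm_eq_abs,
    _root_.abs_of_nonneg (Real.exp_pos _).le]
  have h1 : |⟪a, v⟫_ℝ| ≤ ‖a‖ * ‖v‖ := abs_real_inner_le_norm a v
  have h2 : ‖v‖ ≤ 1 + ‖v‖ ^ 2 := by nlinarith [sq_nonneg (‖v‖ - 1)]
  have h3 : |‖a‖ * (rexp (-b * ‖v‖ ^ 2) + ‖v‖ ^ 2 * rexp (-b * ‖v‖ ^ 2))|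
      = ‖a‖ * ((1 + ‖v‖ ^ 2) * rexp (-b * ‖v‖ ^ 2)) := by
    rw [_root_.abs_of_nonneg (by positivity)]; ring
  rw [h3]
  calc |⟪a, v⟫_ℝ| * rexp (-b * ‖v‖ ^ 2) ≤ (‖a‖ * (1 + ‖v‖ ^ 2)) * rexp (-b * ‖v‖ ^ 2) := by
        gcongr
        · linarith [abs_real_inner_le_norm a v, norm_nonneg a, norm_nonneg v,
            mul_le_mul_of_nonneg_left h2 (norm_nonneg a)]
    _ = ‖a‖ * ((1 + ‖v‖ ^ 2) * rexp (-b * ‖v‖ ^ 2)) := by ring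

lemma gauss_odd (d : ℕ) (a : Rd d) (b : ℝ) :
    ∫ v : Rd d, ⟪a, v⟫_ℝ * rexp (-b * ‖v‖ ^ 2) = 0 := by
  have h := integral_neg_eq_self (fun v : Rd d => ⟪a, v⟫_ℝ * rexp (-b * ‖v‖ ^ 2)) volume
  simp only [inner_neg_right, norm_neg, neg_mul] at h
  rw [integral_neg] at h
  simp only [neg_mul] at h ⊢
  linarith

lemma gauss_full (d : ℕ) {hb : ℝ} (hbp : 0 < hb) (lam c0 : ℝ) (x q : Rd d) :
    ∫ y : Rd d, (lam ^ 2 * ‖x - y‖ ^ 2 + c0 + ‖y - q‖ ^ 2)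
        * ((π * hb) ^ (-(d : ℝ) / 2) * rexp (-‖y - q‖ ^ 2 / hb))
      = lam ^ 2 * ‖x - q‖ ^ 2 + c0 + (lam ^ 2 + 1) * d * hb / 2 := by
  have hb1 : (0:ℝ) < 1 / hb := by positivity
  rw [← integral_add_right_eq_self (μ := volume)
    (fun y : Rd d => (lam ^ 2 * ‖x - y‖ ^ 2 + c0 + ‖y - q‖ ^ 2)
        * ((π * hb) ^ (-(d : ℝ) / 2) * rexp (-‖y - q‖ ^ 2 / hb))) q]
  set a := x - q with ha
  set k := (π * hb) ^ (-(d : ℝ) / 2) with hk'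
  have hkey : ∀ v : Rd d,
      (lam ^ 2 * ‖x - (v + q)‖ ^ 2 + c0 + ‖v + q - q‖ ^ 2) * (k * rexp (-‖v + q - q‖ ^ 2 / hb))
      = (k * (lam ^ 2 * ‖a‖ ^ 2 + c0)) * rexp (-(1 / hb) * ‖v‖ ^ 2)
        + (k * (lam ^ 2 + 1)) * (‖v‖ ^ 2 * rexp (-(1 / hb) * ‖v‖ ^ 2))
        + (-(2 * lam ^ 2) * k) * (⟪a, v⟫_ℝ * rexp (-(1 / hb) * ‖v‖ ^ 2)) := by
    intro v
    have h1 : x - (v + q) = a - v := by rw [ha]; abel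
    have h2 : -‖v‖ ^ 2 / hb = -(1 / hb) * ‖v‖ ^ 2 := by ring
    rw [add_sub_cancel_right, h1, h2, norm_sub_sq_real]
    ring
  simp only [hkey]
  have hA : Integrable (fun v : Rd d => (k * (lam ^ 2 * ‖a‖ ^ 2 + c0)) * rexp (-(1 / hb) * ‖v‖ ^ 2))
      volume := (gauss_integrable d hb1).const_mul _
  have hB : Integrable (fun v : Rd d =>
      (k * (lam ^ 2 + 1)) * (‖v‖ ^ 2 * rexp (-(1 / hb) * ‖v‖ ^ 2))) volume :=
    (sq_gauss_integrable d hb1).const_mul _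
  have hC : Integrable (fun v : Rd d =>
      (-(2 * lam ^ 2) * k) * (⟪a, v⟫_ℝ * rexp (-(1 / hb) * ‖v‖ ^ 2))) volume :=
    (inner_gauss_integrable d a hb1).const_mul _
  have hAB : Integrable (fun v : Rd d =>
      (k * (lam ^ 2 * ‖a‖ ^ 2 + c0)) * rexp (-(1 / hb) * ‖v‖ ^ 2)
      + (k * (lam ^ 2 + 1)) * (‖v‖ ^ 2 * rexp (-(1 / hb) * ‖v‖ ^ 2))) volume := hA.add hB
  rw [integral_add hAB hC, integral_add hA hB,
    integral_const_mul, integral_const_mul, integral_const_mul,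
    gauss_odd, gauss_moment d hb1, GaussianFourier.integral_rexp_neg_mul_sq_norm hb1]
  have hπ : π / (1 / hb) = π * hb := by field_simp
  have hd : (d : ℝ) / (2 * (1 / hb)) = d * hb / 2 := by field_simp
  rw [hπ, hd, finrank_euclideanSpace_fin]
  have hk1 : k * (π * hb) ^ ((d : ℝ) / 2) = 1 := by
    rw [hk', ← Real.rpow_add (by positivity), neg_div, neg_add_cancel, Real.rpow_zero]
  linear_combination (lam ^ 2 * ‖a‖ ^ 2 + c0 + (lam ^ 2 + 1) * ((d : ℝ) * hb / 2)) * hk1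

lemma coherent_eq (d : ℕ) {hb : ℝ} (hbne : hb ≠ 0) (q p : Rd d) :
    coherent d hb q p = fun y =>
      (((π * hb) ^ (-(d : ℝ) / 4) : ℝ) : ℂ) *
        Complex.exp ((-(1 / (2 * hb)) : ℂ) * ((‖y - q‖ ^ 2 : ℝ) : ℂ)
          + (Complex.I / (hb : ℂ)) * ((⟪p, y - q⟫_ℝ : ℝ) : ℂ)) := by
  funext y
  unfold coherent
  congr 1
  congr 1
  have : (hb : ℂ) ≠ 0 := by exact_mod_cast hbne
  push_cast
  field_simp

lemma coherent_norm_sq (d : ℕ) {hb : ℝ} (hbp : 0 < hb) (q p y : Rd d) :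
    ‖coherent d hb q p y‖ ^ 2 = (π * hb) ^ (-(d : ℝ) / 2) * rexp (-‖y - q‖ ^ 2 / hb) := by
  rw [coherent_eq d hbp.ne' q p]
  simp only [norm_mul, Complex.norm_exp, Complex.norm_real, Real.norm_eq_abs]
  have hre : ((-(1 / (2 * hb)) : ℂ) * ((‖y - q‖ ^ 2 : ℝ) : ℂ)
      + (Complex.I / (hb : ℂ)) * ((⟪p, y - q⟫_ℝ : ℝ) : ℂ)).re
      = -(1 / (2 * hb)) * ‖y - q‖ ^ 2 := by
    simp [Complex.add_re, Complex.mul_re, Complex.div_re, Complex.normSq]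
    left
    rw [← Complex.ofReal_pow, Complex.ofReal_re]
  rw [hre, _root_.abs_of_nonneg (Real.rpow_nonneg (by positivity) _), mul_pow,
    ← Real.rpow_natCast ((π * hb) ^ (-(d : ℝ) / 4)) 2, ← Real.rpow_mul (by positivity),
    sq, ← Real.exp_add]
  have h1 : (-(d:ℝ)/4 * (2:ℕ)) = -(d:ℝ)/2 := by push_cast; ring
  have h2 : -(1/(2*hb))*‖y-q‖^2 + -(1/(2*hb))*‖y-q‖^2 = -‖y-q‖^2/hb := by
    field_simp
    ring
  rw [h1, h2]


lemma coherent_fderiv_apply (d : ℕ) {hb : ℝ} (hbp : 0 < hb) (q p y : Rd d) (k : Fin d) :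
    fderiv ℝ (coherent d hb q p) y (EuclideanSpace.single k (1:ℝ))
      = coherent d hb q p y
          * ((-((y k - q k : ℝ) : ℂ) + Complex.I * ((p k : ℝ) : ℂ)) / (hb : ℂ)) := by
  have hnorm : HasFDerivAt (fun y : Rd d => ‖y - q‖ ^ 2) (2 • (innerSL ℝ (y - q))) y := by
    have h := ((hasFDerivAt_id y).sub_const q).norm_sq
    simpa using h
  have hinner : HasFDerivAt (fun y : Rd d => ⟪p, y - q⟫_ℝ) (innerSL ℝ p) y := by
    have h := (innerSL ℝ p).hasFDerivAt.comp y ((hasFDerivAt_id y).sub_const q)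
    exact h
  have hE1 : HasFDerivAt (fun y : Rd d => ((‖y - q‖ ^ 2 : ℝ) : ℂ))
      (Complex.ofRealCLM.comp (2 • (innerSL ℝ (y - q)))) y :=
    Complex.ofRealCLM.hasFDerivAt.comp y hnorm
  have hE2 : HasFDerivAt (fun y : Rd d => ((⟪p, y - q⟫_ℝ : ℝ) : ℂ))
      (Complex.ofRealCLM.comp (innerSL ℝ p)) y :=
    Complex.ofRealCLM.hasFDerivAt.comp y hinner
  have hE := (hE1.const_mul ((-(1 / (2 * hb)) : ℂ))).add (hE2.const_mul (Complex.I / (hb:ℂ)))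
  have hg := hE.cexp.const_mul ((((π * hb) ^ (-(d : ℝ) / 4) : ℝ) : ℂ))
  have hco := hg.congr_of_eventuallyEq
    (Filter.EventuallyEq.of_eq (coherent_eq d hbp.ne' q p))
  rw [hco.fderiv]
  have hbC : (hb : ℂ) ≠ 0 := by exact_mod_cast hbp.ne'
  rw [coherent_eq d hbp.ne' q p]
  simp only [ContinuousLinearMap.smul_apply, ContinuousLinearMap.add_apply,
    ContinuousLinearMap.coe_comp', Function.comp_apply, ContinuousLinearMap.coe_smul',
    Pi.smul_apply, Complex.ofRealCLM_apply, innerSL_apply_apply, smul_eq_mul]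
  have hi1 : ⟪y - q, EuclideanSpace.single k (1:ℝ)⟫_ℝ = y k - q k := by
    rw [EuclideanSpace.inner_single_right]
    simp [PiLp.sub_apply]
  have hi2 : ⟪p, EuclideanSpace.single k (1:ℝ)⟫_ℝ = p k := by
    rw [EuclideanSpace.inner_single_right]
    simp
  rw [hi1, hi2]
  simp only [Pi.add_apply]
  push_cast
  field_simp
  ring

lemma integrable_G (d : ℕ) {hb : ℝ} (hbp : 0 < hb) (lam c0 : ℝ) (x q : Rd d) :
    Integrable (fun y : Rd d => (lam ^ 2 * ‖x - y‖ ^ 2 + c0 + ‖y - q‖ ^ 2)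
        * ((π * hb) ^ (-(d : ℝ) / 2) * rexp (-‖y - q‖ ^ 2 / hb))) := by
  have hb1 : (0:ℝ) < 1 / hb := by positivity
  set a := x - q with ha
  set k := (π * hb) ^ (-(d : ℝ) / 2) with hk'
  have hA : Integrable (fun v : Rd d => (k * (lam ^ 2 * ‖a‖ ^ 2 + c0)) * rexp (-(1 / hb) * ‖v‖ ^ 2))
      volume := (gauss_integrable d hb1).const_mul _
  have hB : Integrable (fun v : Rd d =>
      (k * (lam ^ 2 + 1)) * (‖v‖ ^ 2 * rexp (-(1 / hb) * ‖v‖ ^ 2))) volume :=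
    (sq_gauss_integrable d hb1).const_mul _
  have hC : Integrable (fun v : Rd d =>
      (-(2 * lam ^ 2) * k) * (⟪a, v⟫_ℝ * rexp (-(1 / hb) * ‖v‖ ^ 2))) volume :=
    (inner_gauss_integrable d a hb1).const_mul _
  have hH : Integrable (fun v : Rd d =>
      (k * (lam ^ 2 * ‖a‖ ^ 2 + c0)) * rexp (-(1 / hb) * ‖v‖ ^ 2)
      + (k * (lam ^ 2 + 1)) * (‖v‖ ^ 2 * rexp (-(1 / hb) * ‖v‖ ^ 2))
      + (-(2 * lam ^ 2) * k) * (⟪a, v⟫_ℝ * rexp (-(1 / hb) * ‖v‖ ^ 2))) volume :=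
    (hA.add hB).add hC
  refine (hH.comp_add_right (-q)).congr (ae_of_all _ fun y => ?_)
  simp only [← sub_eq_add_neg]
  have h4 : -‖y - q‖ ^ 2 / hb = -(1 / hb) * ‖y - q‖ ^ 2 := by ring
  have h5 : x - y = a - (y - q) := by rw [ha]; abel
  rw [h4, h5]
  conv_rhs => rw [norm_sub_sq_real]
  ring

lemma norm_sq_eq_sum' (d : ℕ) (v : Rd d) : ‖v‖ ^ 2 = ∑ i, (v i) ^ 2 := by
  rw [EuclideanSpace.norm_eq, Real.sq_sqrt (Finset.sum_nonneg fun i _ => by positivity)]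
  simp [sq_abs]

lemma pointwise_eq (d : ℕ) {hb : ℝ} (hbp : 0 < hb) (lam : ℝ) (x ξ q p y : Rd d) :
    ENNReal.ofReal (lam ^ 2 * ‖x - y‖ ^ 2 * ‖coherent d hb q p y‖ ^ 2)
    + ∑ k : Fin d,
        (‖(ξ k : ℂ) * coherent d hb q p y
          + Complex.I * (hb : ℂ) * fderiv ℝ (coherent d hb q p) y
            (EuclideanSpace.single k (1 : ℝ))‖₊ : ℝ≥0∞) ^ 2
    = ENNReal.ofReal ((lam ^ 2 * ‖x - y‖ ^ 2 + ‖ξ - p‖ ^ 2 + ‖y - q‖ ^ 2)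
        * ((π * hb) ^ (-(d : ℝ) / 2) * rexp (-‖y - q‖ ^ 2 / hb))) := by
  have hbC : (hb : ℂ) ≠ 0 := by exact_mod_cast hbp.ne'
  set φy := coherent d hb q p y with hφ
  have hterm : ∀ k : Fin d, (ξ k : ℂ) * φy
      + Complex.I * (hb : ℂ) * fderiv ℝ (coherent d hb q p) y (EuclideanSpace.single k (1 : ℝ))
      = φy * (((ξ k - p k : ℝ) : ℂ) - Complex.I * ((y k - q k : ℝ) : ℂ)) := by
    intro k
    rw [coherent_fderiv_apply d hbp q p y k, ← hφ]
    push_cast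
    field_simp
    linear_combination (φy * ((p k : ℝ) : ℂ)) * Complex.I_sq
  have hnormterm : ∀ k : Fin d,
      ((‖(ξ k : ℂ) * φy + Complex.I * (hb : ℂ) * fderiv ℝ (coherent d hb q p) y
          (EuclideanSpace.single k (1 : ℝ))‖₊ : ℝ≥0∞) : ℝ≥0∞) ^ 2
      = ENNReal.ofReal (‖φy‖ ^ 2 * ((ξ k - p k) ^ 2 + (y k - q k) ^ 2)) := by
    intro k
    rw [hterm k, ← enorm_eq_nnnorm, ← ofReal_norm_eq_enorm, ← ENNReal.ofReal_pow (norm_nonneg _)]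
    congr 1
    rw [norm_mul, mul_pow]
    congr 1
    rw [Complex.sq_norm]
    simp [Complex.normSq_apply, Complex.sub_re, Complex.sub_im, Complex.mul_re, Complex.mul_im]
    ring
  simp only [hnormterm]
  rw [← ENNReal.ofReal_sum_of_nonneg (fun k _ => by positivity),
    ← ENNReal.ofReal_add (by positivity)
      (Finset.sum_nonneg fun k _ => by positivity)]
  congr 1
  rw [← Finset.mul_sum]
  have hsum : ∑ k : Fin d, ((ξ k - p k) ^ 2 + (y k - q k) ^ 2) = ‖ξ - p‖ ^ 2 + ‖y - q‖ ^ 2 := by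
    rw [Finset.sum_add_distrib, norm_sq_eq_sum' d (ξ - p), norm_sq_eq_sum' d (y - q)]
    simp [PiLp.sub_apply]
  rw [hsum, coherent_norm_sq d hbp q p y]
  ring

/-- **Trace of the transportation cost against a Töplitz operator**: for every finite
positive Borel measure `m` on `ℝ^d × ℝ^d`,
`trace(c_λ(x,ξ,y,ħD_y)^{1/2} OP^T_ħ[(2πħ)^d m] c_λ(x,ξ,y,ħD_y)^{1/2})
  = ∬ (λ²|x-q|² + |ξ-p|² + ½(λ²+1)dħ) m(dp dq)`,
as an equality in `[0,+∞]`.  The left-hand side is computed on the coherent-state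
decomposition `OP^T_ħ[(2πħ)^d m] = ∬ |q,p⟩⟨q,p| m(dq dp)`: it is the `m`-integral of the
quadratic form of `c_λ(x,ξ,y,ħD_y)` at the coherent states `|q,p⟩`. -/
theorem trace_cost_toeplitz
    (d : ℕ) (hb lam : ℝ) (hb_pos : 0 < hb) (hlam : 0 < lam)
    (x ξ : Rd d)
    (m : Measure (Rd d × Rd d)) [IsFiniteMeasure m] :
    (∫⁻ w : Rd d × Rd d, costForm d hb lam x ξ (coherent d hb w.1 w.2) ∂m)
      = ∫⁻ w : Rd d × Rd d,
          ENNReal.ofReal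
            (lam ^ 2 * ‖x - w.1‖ ^ 2 + ‖ξ - w.2‖ ^ 2 + (lam ^ 2 + 1) * d * hb / 2) ∂m := by
  refine lintegral_congr fun w => ?_
  have step1 : costForm d hb lam x ξ (coherent d hb w.1 w.2)
      = ∫⁻ y : Rd d, ENNReal.ofReal
          ((lam ^ 2 * ‖x - y‖ ^ 2 + ‖ξ - w.2‖ ^ 2 + ‖y - w.1‖ ^ 2)
            * ((π * hb) ^ (-(d : ℝ) / 2) * rexp (-‖y - w.1‖ ^ 2 / hb))) :=
    lintegral_congr fun y => pointwise_eq d hb_pos lam x ξ w.1 w.2 y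
  rw [step1,
    ← ofReal_integral_eq_lintegral_ofReal (integrable_G d hb_pos lam (‖ξ - w.2‖ ^ 2) x w.1)
      (ae_of_all _ fun y => by positivity),
    gauss_full d hb_pos lam (‖ξ - w.2‖ ^ 2) x w.1]
end
end
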